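/- For all p, q ∈ ℝᵈ and β > 0, |f_β(p + q/2, p − q/2) − f_β(p, p)| ≤ C·min{1, |q|²} for a constant C depending only on β and μ, where f_β(p,q) = Ξ_β(|p|² − μ, |q|² − μ) and Ξ_β(E,E') = (tanh(βE/2) + tanh(βE'/2))/(E + E') (with the continuous extension at E' = −E). -/

import Mathlib

/-- The two-variable symbol `Ξ_β(E, E') = (tanh(βE/2) + tanh(βE'/2))/(E + E')`,
with the continuous extension `(β/2)/cosh²(βE/2)` at `E' = −E`. -/
noncomputable def XiSym (β E E' : ℝ) : ℝ :=
  if E' = -E then (β / 2) / Real.cosh (β * E / 2) ^ 2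
  else (Real.tanh (β * E / 2) + Real.tanh (β * E' / 2)) / (E + E')

open Real
open scoped RealInnerProductSpace

private lemma mono_aux {f f' : ℝ → ℝ} (hd : ∀ y, HasDerivAt f (f' y) y)
    (h0 : ∀ y, 0 ≤ y → 0 ≤ f' y) : MonotoneOn f (Set.Ici 0) := by
  apply monotoneOn_of_deriv_nonneg (convex_Ici 0)
  · exact fun y _ => (hd y).continuousAt.continuousWithinAt
  · exact fun y _ => (hd y).differentiableAt.differentiableWithinAt
  · intro y hy
    rw [interior_Ici, Set.mem_Ioi] at hy
    rw [(hd y).deriv]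
    exact h0 y hy.le

lemma sinh_le_mul_cosh {x : ℝ} (hx : 0 ≤ x) : Real.sinh x ≤ x * Real.cosh x := by
  have hmono : MonotoneOn (fun y : ℝ => y * Real.cosh y - Real.sinh y) (Set.Ici 0) := by
    apply mono_aux (f' := fun y => (1 * Real.cosh y + y * Real.sinh y) - Real.cosh y)
    · exact fun y => ((hasDerivAt_id y).mul (Real.hasDerivAt_cosh y)).sub (Real.hasDerivAt_sinh y)
    · intro y hy
      have := Real.sinh_nonneg_iff.2 hy
      nlinarith
  have := hmono (Set.self_mem_Ici) (Set.mem_Ici.2 hx) hx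
  simp at this
  linarith

lemma abs_sinh_le_mul_cosh (x : ℝ) : |Real.sinh x| ≤ |x| * Real.cosh x := by
  rw [Real.abs_sinh, ← Real.cosh_abs]
  exact sinh_le_mul_cosh (abs_nonneg x)

lemma abs_sinh_le_cosh (x : ℝ) : |Real.sinh x| ≤ Real.cosh x := by
  have h1 := Real.cosh_add_sinh x
  have h2 := Real.cosh_sub_sinh x
  have e1 := Real.exp_pos x
  have e2 := Real.exp_pos (-x)
  rw [abs_le]
  constructor <;> nlinarith

lemma abs_tanh_le_one (x : ℝ) : |Real.tanh x| ≤ 1 := by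
  rw [Real.tanh_eq_sinh_div_cosh, abs_div, abs_of_pos (Real.cosh_pos x),
    div_le_one (Real.cosh_pos x)]
  exact abs_sinh_le_cosh x

lemma cosh_sub_one_le (z : ℝ) : Real.cosh z - 1 ≤ z ^ 2 / 2 * Real.cosh z := by
  have h1 : Real.cosh z = 2 * Real.cosh (z / 2) ^ 2 - 1 := by
    have := Real.cosh_two_mul (z / 2)
    have h2 := Real.cosh_sq (z / 2)
    rw [show 2 * (z / 2) = z by ring] at this
    nlinarith
  have h2 : |Real.sinh (z / 2)| ≤ |z / 2| * Real.cosh (z / 2) := abs_sinh_le_mul_cosh (z / 2)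
  have h3 : Real.sinh (z / 2) ^ 2 ≤ (z / 2) ^ 2 * Real.cosh (z / 2) ^ 2 := by
    have := sq_le_sq' (neg_abs_le (Real.sinh (z/2))) (le_abs_self (Real.sinh (z/2)))
    nlinarith [sq_abs (Real.sinh (z/2)), sq_abs (z/2), Real.cosh_pos (z/2),
      abs_nonneg (z/2), abs_nonneg (Real.sinh (z/2)),
      mul_le_mul h2 h2 (abs_nonneg _) (mul_nonneg (abs_nonneg _) (Real.cosh_pos _).le)]
  have h4 : Real.cosh z - 1 = 2 * Real.sinh (z / 2) ^ 2 := by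
    have := Real.cosh_two_mul (z / 2)
    rw [show 2 * (z / 2) = z by ring] at this
    have h5 := Real.sinh_sq (z / 2)
    nlinarith
  have h6 : Real.cosh (z / 2) ^ 2 = (Real.cosh z + 1) / 2 := by
    have := Real.cosh_two_mul (z / 2)
    rw [show 2 * (z / 2) = z by ring] at this
    have := Real.cosh_sq (z / 2)
    nlinarith
  have h7 := Real.one_le_cosh z
  nlinarith

lemma sinh_sub_self_le (z : ℝ) (hz : 0 ≤ z) :
    Real.sinh z - z ≤ z ^ 2 / 2 * Real.sinh z := by
  have hmono : MonotoneOn (fun y : ℝ => y ^ 2 / 2 * Real.sinh y - Real.sinh y + y)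
      (Set.Ici 0) := by
    apply mono_aux (f' := fun y =>
      ((2 * y ^ 1 / 2) * Real.sinh y + y ^ 2 / 2 * Real.cosh y) - Real.cosh y + 1)
    · intro y
      have H := ((((hasDerivAt_pow 2 y).div_const 2).mul (Real.hasDerivAt_sinh y)).sub
        (Real.hasDerivAt_sinh y)).add (hasDerivAt_id y)
      exact H.congr_deriv (by norm_num)
    · intro y hy
      have h1 := cosh_sub_one_le y
      have h2 := Real.sinh_nonneg_iff.2 hy
      nlinarith
  have := hmono (Set.self_mem_Ici) (Set.mem_Ici.2 hz) hz
  simp at this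
  linarith

lemma mul_cosh_sub_sinh_le (z : ℝ) (hz : 0 ≤ z) :
    z * Real.cosh z - Real.sinh z ≤ z ^ 2 * Real.sinh z := by
  have hmono : MonotoneOn (fun y : ℝ => y ^ 2 * Real.sinh y - (y * Real.cosh y - Real.sinh y))
      (Set.Ici 0) := by
    apply mono_aux (f' := fun y =>
      ((2 * y ^ 1) * Real.sinh y + y ^ 2 * Real.cosh y) -
        ((1 * Real.cosh y + y * Real.sinh y) - Real.cosh y))
    · intro y
      have H := (((hasDerivAt_pow 2 y).mul (Real.hasDerivAt_sinh y)).sub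
        (((hasDerivAt_id y).mul (Real.hasDerivAt_cosh y)).sub (Real.hasDerivAt_sinh y)))
      exact H.congr_deriv (by norm_num [id])
    · intro y hy
      have h2 := Real.sinh_nonneg_iff.2 hy
      have h3 := (Real.cosh_pos y).le
      nlinarith
  have := hmono (Set.self_mem_Ici) (Set.mem_Ici.2 hz) hz
  simp at this
  linarith

lemma abs_sinh_sub_self_le (z : ℝ) : |Real.sinh z - z| ≤ z ^ 2 / 2 * |Real.sinh z| := by
  rcases le_total 0 z with hz | hz
  · rw [abs_of_nonneg (by linarith [Real.self_le_sinh_iff.2 hz]),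
      abs_of_nonneg (Real.sinh_nonneg_iff.2 hz)]
    exact sinh_sub_self_le z hz
  · have h := sinh_sub_self_le (-z) (by linarith)
    rw [Real.sinh_neg] at h
    rw [abs_of_nonpos (by linarith [Real.sinh_le_self_iff.2 hz]),
      abs_of_nonpos (Real.sinh_nonpos_iff.2 hz)]
    nlinarith

lemma abs_mul_cosh_sub_sinh_le (z : ℝ) :
    |z * Real.cosh z - Real.sinh z| ≤ z ^ 2 * |Real.sinh z| := by
  rcases le_total 0 z with hz | hz
  · rw [abs_of_nonneg (by nlinarith [sinh_le_mul_cosh hz] : (0:ℝ) ≤ z * Real.cosh z - Real.sinh z),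
      abs_of_nonneg (Real.sinh_nonneg_iff.2 hz)]
    exact mul_cosh_sub_sinh_le z hz
  · have h := mul_cosh_sub_sinh_le (-z) (by linarith)
    rw [Real.sinh_neg, Real.cosh_neg] at h
    rw [abs_of_nonpos, abs_of_nonpos (Real.sinh_nonpos_iff.2 hz)]
    · nlinarith
    · nlinarith [sinh_le_mul_cosh (neg_nonneg.2 hz), Real.sinh_neg z, Real.cosh_neg z]

noncomputable def Ssh (z : ℝ) : ℝ := if z = 0 then 1 else Real.sinh z / z

noncomputable def Tsh (y : ℝ) : ℝ := if y = 0 then 1 else Real.tanh y / y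

lemma Ssh_pos (z : ℝ) : 0 < Ssh z := by
  unfold Ssh
  split_ifs with h
  · norm_num
  · rcases lt_or_gt_of_ne h with hz | hz
    · exact div_pos_of_neg_of_neg (Real.sinh_neg_iff.2 hz) hz
    · exact div_pos (Real.sinh_pos_iff.2 hz) hz

lemma Tsh_nonneg (y : ℝ) : 0 ≤ Tsh y := by
  unfold Tsh
  split_ifs with h
  · norm_num
  · rw [Real.tanh_eq_sinh_div_cosh, div_div]
    rcases lt_or_gt_of_ne h with hz | hz
    · exact le_of_lt (div_pos_of_neg_of_neg (Real.sinh_neg_iff.2 hz)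
        (mul_neg_of_pos_of_neg (Real.cosh_pos y) hz))
    · exact le_of_lt (div_pos (Real.sinh_pos_iff.2 hz) (mul_pos (Real.cosh_pos y) hz))

lemma Tsh_le_one (y : ℝ) : Tsh y ≤ 1 := by
  unfold Tsh
  split_ifs with h
  · exact le_refl 1
  · rw [Real.tanh_eq_sinh_div_cosh, div_div, div_le_one_iff]
    rcases lt_or_gt_of_ne h with hz | hz
    · right; right
      refine ⟨mul_neg_of_pos_of_neg (Real.cosh_pos y) hz, ?_⟩
      have := abs_sinh_le_mul_cosh y
      rw [abs_of_nonpos (Real.sinh_nonpos_iff.2 hz.le), abs_of_neg hz] at this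
      nlinarith
    · left
      refine ⟨mul_pos (Real.cosh_pos y) hz, ?_⟩
      have := abs_sinh_le_mul_cosh y
      rw [abs_of_nonneg (Real.sinh_nonneg_iff.2 hz.le), abs_of_pos hz] at this
      nlinarith

lemma abs_mul_Tsh_le_one (y : ℝ) : |y| * Tsh y ≤ 1 := by
  unfold Tsh
  split_ifs with h
  · simp [h]
  · rw [show |y| * (Real.tanh y / y) = |y| / y * Real.tanh y by ring]
    rcases lt_or_gt_of_ne h with hz | hz
    · rw [abs_of_neg hz]
      have : -y / y = -1 := by field_simp
      rw [this]
      have := abs_tanh_le_one y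
      rw [abs_le] at this
      linarith [this.1]
    · rw [abs_of_pos hz, div_self hz.ne', one_mul]
      linarith [(abs_le.1 (abs_tanh_le_one y)).2]

/-- The derivative of `Tsh`. At `0` this formula evaluates to `0/0 = 0`. -/
noncomputable def Tsh' (y : ℝ) : ℝ := (y - Real.sinh y * Real.cosh y) / (y ^ 2 * Real.cosh y ^ 2)

lemma abs_Tsh' (y : ℝ) : |Tsh' y| ≤ 2 := by
  unfold Tsh'
  rcases eq_or_ne y 0 with h | h
  · simp [h]
  · have hkey : |y - Real.sinh y * Real.cosh y| ≤ 2 * y ^ 2 * (|Real.sinh y| * Real.cosh y) := by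
      have h1 := abs_sinh_sub_self_le (2 * y)
      rw [Real.sinh_two_mul] at h1
      have e1 : |2 * Real.sinh y * Real.cosh y - 2 * y|
          = 2 * |Real.sinh y * Real.cosh y - y| := by
        rw [show (2:ℝ) * Real.sinh y * Real.cosh y - 2 * y
          = 2 * (Real.sinh y * Real.cosh y - y) by ring, abs_mul, abs_two]
      have e2 : |2 * Real.sinh y * Real.cosh y| = 2 * (|Real.sinh y| * Real.cosh y) := by
        rw [show (2:ℝ) * Real.sinh y * Real.cosh y
          = 2 * (Real.sinh y * Real.cosh y) by ring, abs_mul, abs_mul,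
          abs_of_pos (Real.cosh_pos y), abs_two]
      have e3 : |y - Real.sinh y * Real.cosh y| = |Real.sinh y * Real.cosh y - y| :=
        abs_sub_comm _ _
      rw [e1, e2] at h1
      rw [e3]
      nlinarith
    rw [abs_div]
    have hden : |y ^ 2 * Real.cosh y ^ 2| = y ^ 2 * Real.cosh y ^ 2 := by
      exact abs_of_pos (by positivity)
    rw [hden, div_le_iff₀ (by positivity)]
    calc |y - Real.sinh y * Real.cosh y| ≤ 2 * y ^ 2 * (|Real.sinh y| * Real.cosh y) := hkey
      _ ≤ 2 * y ^ 2 * (Real.cosh y * Real.cosh y) := by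
          exact mul_le_mul_of_nonneg_left
            (mul_le_mul_of_nonneg_right (abs_sinh_le_cosh y) (Real.cosh_pos y).le)
            (by positivity)
      _ = 2 * (y ^ 2 * Real.cosh y ^ 2) := by ring

lemma abs_tanh_le_abs (x : ℝ) : |Real.tanh x| ≤ |x| := by
  rw [Real.tanh_eq_sinh_div_cosh, abs_div, abs_of_pos (Real.cosh_pos x),
    div_le_iff₀ (Real.cosh_pos x)]
  exact abs_sinh_le_mul_cosh x

lemma Tsh_hasDerivAt (y : ℝ) : HasDerivAt Tsh (Tsh' y) y := by
  rcases eq_or_ne y 0 with h | h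
  · subst h
    have h0 : Tsh' 0 = 0 := by simp [Tsh']
    rw [h0, hasDerivAt_iff_tendsto_slope]
    apply squeeze_zero_norm' (a := fun x : ℝ => |x|)
    · filter_upwards [self_mem_nhdsWithin] with x hx
      have hx0 : x ≠ 0 := hx
      have hs : slope Tsh 0 x = (Real.tanh x - x) / x ^ 2 := by
        have hT0 : Tsh 0 = 1 := by simp [Tsh]
        have hTx : Tsh x = Real.tanh x / x := by simp [Tsh, hx0]
        rw [slope_def_field, hT0, hTx, sub_zero,
          div_eq_div_iff hx0 (pow_ne_zero 2 hx0)]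
        field_simp
      rw [Real.norm_eq_abs, hs, abs_div, abs_of_pos (by positivity : (0:ℝ) < x ^ 2)]
      rw [div_le_iff₀ (by positivity : (0:ℝ) < x ^ 2)]
      have h1 : |Real.tanh x - x| ≤ x ^ 2 * |Real.tanh x| := by
        have h2 := abs_mul_cosh_sub_sinh_le x
        have h3 : Real.tanh x - x = -((x * Real.cosh x - Real.sinh x) / Real.cosh x) := by
          rw [Real.tanh_eq_sinh_div_cosh]
          field_simp
          ring
        rw [h3, abs_neg, abs_div, abs_of_pos (Real.cosh_pos x),
          div_le_iff₀ (Real.cosh_pos x)]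
        calc |x * Real.cosh x - Real.sinh x| ≤ x ^ 2 * |Real.sinh x| := h2
          _ = x ^ 2 * |Real.tanh x| * Real.cosh x := by
              rw [Real.tanh_eq_sinh_div_cosh, abs_div, abs_of_pos (Real.cosh_pos x)]
              field_simp
      calc |Real.tanh x - x| ≤ x ^ 2 * |Real.tanh x| := h1
        _ ≤ |x| * x ^ 2 := by
            have := abs_tanh_le_abs x
            nlinarith [sq_nonneg x, abs_nonneg (Real.tanh x)]
    · exact (continuous_abs.tendsto' 0 0 abs_zero).mono_left nhdsWithin_le_nhds
  · have htanh : HasDerivAt Real.tanh (1 / Real.cosh y ^ 2) y := by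
      have hd := (Real.hasDerivAt_sinh y).div (Real.hasDerivAt_cosh y) (Real.cosh_pos y).ne'
      have heq : Real.tanh = fun x => Real.sinh x / Real.cosh x :=
        funext fun x => Real.tanh_eq_sinh_div_cosh x
      rw [heq]
      refine hd.congr_deriv ?_
      have := Real.cosh_sq_sub_sinh_sq y
      rw [div_eq_div_iff (by positivity) (by positivity)]
      nlinarith
    have H := htanh.div (hasDerivAt_id y) h
    have heq2 : (1 / Real.cosh y ^ 2 * id y - Real.tanh y * 1) / id y ^ 2 = Tsh' y := by
      simp only [id]
      rw [Tsh', Real.tanh_eq_sinh_div_cosh]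
      field_simp
    rw [heq2] at H
    apply H.congr_of_eventuallyEq
    filter_upwards [eventually_ne_nhds h] with x hx
    simp [Tsh, hx]

lemma Tsh_lipschitz (a b : ℝ) : |Tsh a - Tsh b| ≤ 2 * |a - b| := by
  have h := Convex.norm_image_sub_le_of_norm_hasDerivWithin_le (f := Tsh) (f' := Tsh')
    (s := Set.univ) (fun x _ => (Tsh_hasDerivAt x).hasDerivWithinAt)
    (fun x _ => by simpa [Real.norm_eq_abs] using abs_Tsh' x) convex_univ
    (Set.mem_univ b) (Set.mem_univ a)
  simpa [Real.norm_eq_abs] using h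

lemma two_Ssh_div (z : ℝ) : 2 * Ssh z / (Real.cosh z + 1) = Tsh (z / 2) := by
  rcases eq_or_ne z 0 with h | h
  · simp [h, Ssh, Tsh]
    norm_num
  · have h2 : z / 2 ≠ 0 := by simpa using h
    rw [Ssh, if_neg h, Tsh, if_neg h2, Real.tanh_eq_sinh_div_cosh]
    have hs : Real.sinh z = 2 * Real.sinh (z / 2) * Real.cosh (z / 2) := by
      rw [← Real.sinh_two_mul]
      ring_nf
    have hc : Real.cosh z + 1 = 2 * Real.cosh (z / 2) ^ 2 := by
      have h1 : Real.cosh (2 * (z / 2)) = Real.cosh (z / 2) ^ 2 + Real.sinh (z / 2) ^ 2 :=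
        Real.cosh_two_mul (z / 2)
      rw [show 2 * (z / 2) = z by ring] at h1
      have h2 := Real.cosh_sq (z / 2)
      nlinarith
    rw [hs, hc]
    have hcp := Real.cosh_pos (z / 2)
    field_simp

set_option maxHeartbeats 2000000 in
lemma core (m w t v : ℝ) (ht : 0 ≤ t) (hwm : 0 ≤ w + m) (hv : v ^ 2 ≤ 4 * t * (w + m)) :
    |2 * Ssh (w + t) / (Real.cosh (w + t) + Real.cosh v)
      - 2 * Ssh w / (Real.cosh w + 1)| ≤ (5 + 2 * |m|) * min 1 t := by
  set u := w + t with hu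
  have hcu := Real.cosh_pos u
  have hcv1 : (1:ℝ) ≤ Real.cosh v := Real.one_le_cosh v
  have hSu := Ssh_pos u
  have hSw := Ssh_pos w
  have hden1 : 0 < Real.cosh u + Real.cosh v := by linarith
  have hden2 : 0 < Real.cosh u + 1 := by linarith
  have hden3 : 0 < Real.cosh w + 1 := by linarith [Real.cosh_pos w]
  set P := 2 * Ssh u / (Real.cosh u + Real.cosh v) with hP
  have hpsiu : 2 * Ssh u / (Real.cosh u + 1) = Tsh (u / 2) := two_Ssh_div u
  have hpsiw : 2 * Ssh w / (Real.cosh w + 1) = Tsh (w / 2) := two_Ssh_div w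
  -- P is between 0 and Tsh (u/2)
  have hP0 : 0 < P := by positivity
  have hPle : P ≤ Tsh (u / 2) := by
    rw [← hpsiu]
    apply div_le_div_of_nonneg_left (by positivity) hden2
    linarith
  have hTu1 : Tsh (u / 2) ≤ 1 := Tsh_le_one (u / 2)
  have hTw1 : Tsh (w / 2) ≤ 1 := Tsh_le_one (w / 2)
  have hTu0 : 0 ≤ Tsh (u / 2) := Tsh_nonneg (u / 2)
  have hTw0 : 0 ≤ Tsh (w / 2) := Tsh_nonneg (w / 2)
  -- first piece: |P - Tsh (u/2)| ≤ (4 + 2|m|) * t  and ≤ 1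
  have hT2 : |Tsh (u / 2) - Tsh (w / 2)| ≤ t := by
    have := Tsh_lipschitz (u / 2) (w / 2)
    rw [show u / 2 - w / 2 = t / 2 by rw [hu]; ring,
      abs_of_nonneg (show (0:ℝ) ≤ t / 2 by linarith)] at this
    linarith
  have hT1 : Tsh (u / 2) - P ≤ (4 + 2 * |m|) * t := by
    have hcvb : Real.cosh v - 1 ≤ v ^ 2 / 2 * Real.cosh v := cosh_sub_one_le v
    have step1 : Tsh (u / 2) - P
        = 2 * Ssh u * (Real.cosh v - 1) / ((Real.cosh u + Real.cosh v) * (Real.cosh u + 1)) := by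
      rw [← hpsiu, hP]
      field_simp
      ring
    have step2 : 2 * Ssh u * (Real.cosh v - 1) / ((Real.cosh u + Real.cosh v) * (Real.cosh u + 1))
        ≤ v ^ 2 * Ssh u / (Real.cosh u + 1) := by
      rw [div_le_div_iff₀ (by positivity) hden2]
      have e1 : Real.cosh v - 1 ≤ v ^ 2 / 2 * (Real.cosh u + Real.cosh v) := by
        nlinarith [sq_nonneg v]
      nlinarith [mul_le_mul_of_nonneg_left e1 (by positivity : (0:ℝ) ≤ 2 * Ssh u), hden2]
    have step3 : v ^ 2 * Ssh u / (Real.cosh u + 1) ≤ 4 * t * (w + m) * (Tsh (u / 2) / 2) := by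
      have : v ^ 2 * Ssh u / (Real.cosh u + 1) = v ^ 2 * (Tsh (u / 2) / 2) := by
        rw [← hpsiu]
        field_simp
      rw [this]
      apply mul_le_mul_of_nonneg_right hv (by linarith)
    have step4 : (w + m) * Tsh (u / 2) ≤ 2 + |m| := by
      have h1 : w + m ≤ u + m := by rw [hu]; linarith
      have h2 : (w + m) * Tsh (u / 2) ≤ (u + m) * Tsh (u / 2) :=
        mul_le_mul_of_nonneg_right h1 hTu0
      have h3 : (u + m) * Tsh (u / 2) ≤ |u| * Tsh (u / 2) + |m| * Tsh (u / 2) := by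
        have : u + m ≤ |u| + |m| := by
          calc u + m ≤ |u| + m := by linarith [le_abs_self u]
            _ ≤ |u| + |m| := by linarith [le_abs_self m]
        nlinarith
      have h4 : |u| * Tsh (u / 2) ≤ 2 := by
        have := abs_mul_Tsh_le_one (u / 2)
        have e : |u / 2| = |u| / 2 := by rw [abs_div]; norm_num
        rw [e] at this
        linarith
      have h5 : |m| * Tsh (u / 2) ≤ |m| := by
        calc |m| * Tsh (u / 2) ≤ |m| * 1 := mul_le_mul_of_nonneg_left hTu1 (abs_nonneg m)
          _ = |m| := mul_one _
      linarith
    calc Tsh (u / 2) - P ≤ v ^ 2 * Ssh u / (Real.cosh u + 1) := by rw [step1]; exact step2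
      _ ≤ 4 * t * (w + m) * (Tsh (u / 2) / 2) := step3
      _ = 2 * t * ((w + m) * Tsh (u / 2)) := by ring
      _ ≤ 2 * t * (2 + |m|) := by
          apply mul_le_mul_of_nonneg_left step4 (by linarith)
      _ = (4 + 2 * |m|) * t := by ring
  -- combine
  rw [hpsiw]
  have habs : |P - Tsh (w / 2)| ≤ (Tsh (u / 2) - P) + |Tsh (u / 2) - Tsh (w / 2)| := by
    have := abs_sub_abs_le_abs_sub P (Tsh (u / 2))
    have h6 : P - Tsh (w / 2) = -(Tsh (u / 2) - P) + (Tsh (u / 2) - Tsh (w / 2)) := by ring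
    calc |P - Tsh (w / 2)| = |-(Tsh (u / 2) - P) + (Tsh (u / 2) - Tsh (w / 2))| := by rw [← h6]
      _ ≤ |-(Tsh (u / 2) - P)| + |Tsh (u / 2) - Tsh (w / 2)| := abs_add_le _ _
      _ = (Tsh (u / 2) - P) + |Tsh (u / 2) - Tsh (w / 2)| := by
          rw [abs_neg, abs_of_nonneg (by linarith)]
  rcases le_total t 1 with hle | hle
  · rw [min_eq_right hle]
    have hm := abs_nonneg m
    nlinarith
  · rw [min_eq_left hle]
    have h7 : |Tsh (u / 2) - Tsh (w / 2)| ≤ 1 := by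
      rw [abs_le]
      constructor <;> nlinarith
    have hm := abs_nonneg m
    nlinarith

lemma XiSym_eq (β E E' : ℝ) (hβ : 0 < β) :
    XiSym β E E' = β * Ssh (β * (E + E') / 2)
      / (Real.cosh (β * (E + E') / 2) + Real.cosh (β * (E - E') / 2)) := by
  unfold XiSym
  split_ifs with h
  · subst h
    rw [show β * (E + -E) / 2 = 0 by ring, show β * (E - -E) / 2 = β * E by ring]
    have hSsh0 : Ssh 0 = 1 := by simp [Ssh]
    rw [hSsh0, Real.cosh_zero]
    have hc : Real.cosh (β * E) = 2 * Real.cosh (β * E / 2) ^ 2 - 1 := by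
      have h1 := Real.cosh_two_mul (β * E / 2)
      rw [show 2 * (β * E / 2) = β * E by ring] at h1
      have h2 := Real.cosh_sq (β * E / 2)
      nlinarith
    rw [hc]
    have hcp := Real.cosh_pos (β * E / 2)
    field_simp
    ring
  · have hEE : E + E' ≠ 0 := by
      intro hc
      exact h (by linarith)
    have hz : β * (E + E') / 2 ≠ 0 := by
      apply div_ne_zero _ two_ne_zero
      exact mul_ne_zero hβ.ne' hEE
    rw [Ssh, if_neg hz]
    rw [show β * (E + E') / 2 = β * E / 2 + β * E' / 2 by ring,
      show β * (E - E') / 2 = β * E / 2 - β * E' / 2 by ring]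
    rw [Real.sinh_add, Real.cosh_add, Real.cosh_sub,
      Real.tanh_eq_sinh_div_cosh, Real.tanh_eq_sinh_div_cosh]
    have hx := Real.cosh_pos (β * E / 2)
    have hy := Real.cosh_pos (β * E' / 2)
    have hz2 : β * E / 2 + β * E' / 2 ≠ 0 := by
      rw [show β * E / 2 + β * E' / 2 = β * (E + E') / 2 by ring]
      exact hz
    rw [show Real.cosh (β * E / 2) * Real.cosh (β * E' / 2)
        + Real.sinh (β * E / 2) * Real.sinh (β * E' / 2)
        + (Real.cosh (β * E / 2) * Real.cosh (β * E' / 2)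
          - Real.sinh (β * E / 2) * Real.sinh (β * E' / 2))
        = 2 * (Real.cosh (β * E / 2) * Real.cosh (β * E' / 2)) by ring]
    rw [div_add_div _ _ hx.ne' hy.ne']
    rw [div_eq_div_iff hEE (by positivity)]
    have hz3 : β * E + β * E' ≠ 0 := fun hc => hz2 (by linarith)
    field_simp [hz2, hz3, hx.ne', hy.ne']

lemma min_scale {c x : ℝ} (hc : 0 ≤ c) (hx : 0 ≤ x) : min 1 (c * x) ≤ max 1 c * min 1 x := by
  rcases le_total x 1 with h | h
  · rw [min_eq_right h]
    calc min 1 (c * x) ≤ c * x := min_le_right _ _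
      _ ≤ max 1 c * x := mul_le_mul_of_nonneg_right (le_max_right 1 c) hx
  · rw [min_eq_left h]
    calc min 1 (c * x) ≤ 1 := min_le_left _ _
      _ ≤ max 1 c * 1 := by simp [le_max_left]

/-- The symbol `f_β(p, q) = Ξ_β(|p|² − μ, |q|² − μ)` of the operator `K_T`
satisfies `|f_β(p + q/2, p − q/2) − f_β(p, p)| ≤ C min{1, |q|²}` for a constant
`C` depending only on `β` and `μ`. -/
theorem fbeta_symbol_quadratic_continuity (μ β : ℝ) (hβ : 0 < β) :
    ∃ C > 0, ∀ (d : ℕ) (p q : EuclideanSpace ℝ (Fin d)),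
      |XiSym β (‖p + (1 / 2 : ℝ) • q‖ ^ 2 - μ) (‖p - (1 / 2 : ℝ) • q‖ ^ 2 - μ)
          - XiSym β (‖p‖ ^ 2 - μ) (‖p‖ ^ 2 - μ)|
        ≤ C * min 1 (‖q‖ ^ 2) := by
  refine ⟨β / 2 * (5 + 2 * |β * μ|) * max 1 (β / 4), by positivity, ?_⟩
  intro d p q
  have hn1 : ‖p + (1 / 2 : ℝ) • q‖ ^ 2 = ‖p‖ ^ 2 + ⟪p, q⟫ + ‖q‖ ^ 2 / 4 := by
    rw [norm_add_sq_real, real_inner_smul_right, norm_smul, Real.norm_eq_abs]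
    rw [abs_of_pos (by norm_num : (0:ℝ) < 1/2)]
    ring
  have hn2 : ‖p - (1 / 2 : ℝ) • q‖ ^ 2 = ‖p‖ ^ 2 - ⟪p, q⟫ + ‖q‖ ^ 2 / 4 := by
    rw [norm_sub_sq_real, real_inner_smul_right, norm_smul, Real.norm_eq_abs]
    rw [abs_of_pos (by norm_num : (0:ℝ) < 1/2)]
    ring
  set w : ℝ := β * (‖p‖ ^ 2 - μ) with hw
  set t : ℝ := β * ‖q‖ ^ 2 / 4 with htdef
  set v : ℝ := β * ⟪p, q⟫ with hv
  rw [XiSym_eq β _ _ hβ, XiSym_eq β _ _ hβ]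
  have e1 : β * ((‖p + (1 / 2 : ℝ) • q‖ ^ 2 - μ) + (‖p - (1 / 2 : ℝ) • q‖ ^ 2 - μ)) / 2
      = w + t := by rw [hn1, hn2, hw, htdef]; ring
  have e2 : β * ((‖p + (1 / 2 : ℝ) • q‖ ^ 2 - μ) - (‖p - (1 / 2 : ℝ) • q‖ ^ 2 - μ)) / 2
      = v := by rw [hn1, hn2, hv]; ring
  have e3 : β * ((‖p‖ ^ 2 - μ) + (‖p‖ ^ 2 - μ)) / 2 = w := by rw [hw]; ring
  have e4 : β * ((‖p‖ ^ 2 - μ) - (‖p‖ ^ 2 - μ)) / 2 = 0 := by ring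
  rw [e1, e2, e3, e4, Real.cosh_zero]
  have hfac : β * Ssh (w + t) / (Real.cosh (w + t) + Real.cosh v)
        - β * Ssh w / (Real.cosh w + 1)
      = (β / 2) * (2 * Ssh (w + t) / (Real.cosh (w + t) + Real.cosh v)
        - 2 * Ssh w / (Real.cosh w + 1)) := by ring
  rw [hfac, abs_mul, abs_of_pos (by positivity : (0:ℝ) < β / 2)]
  have ht : 0 ≤ t := by rw [htdef]; positivity
  have hwm : 0 ≤ w + β * μ := by
    rw [hw, show β * (‖p‖ ^ 2 - μ) + β * μ = β * ‖p‖ ^ 2 by ring]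
    positivity
  have hvb : v ^ 2 ≤ 4 * t * (w + β * μ) := by
    rw [hv, htdef, hw]
    have h1 := abs_real_inner_le_norm p q
    have h2 : ⟪p, q⟫ ^ 2 ≤ ‖p‖ ^ 2 * ‖q‖ ^ 2 := by
      nlinarith [abs_nonneg ⟪p, q⟫, sq_abs ⟪p, q⟫, norm_nonneg p, norm_nonneg q]
    nlinarith [sq_nonneg β]
  have hcore := core (β * μ) w t v ht hwm hvb
  calc β / 2 * |2 * Ssh (w + t) / (Real.cosh (w + t) + Real.cosh v)
        - 2 * Ssh w / (Real.cosh w + 1)|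
      ≤ β / 2 * ((5 + 2 * |β * μ|) * min 1 t) := by
        apply mul_le_mul_of_nonneg_left hcore (by positivity)
    _ ≤ β / 2 * ((5 + 2 * |β * μ|) * (max 1 (β / 4) * min 1 (‖q‖ ^ 2))) := by
        apply mul_le_mul_of_nonneg_left _ (by positivity)
        apply mul_le_mul_of_nonneg_left _ (by positivity)
        rw [htdef, show β * ‖q‖ ^ 2 / 4 = (β / 4) * ‖q‖ ^ 2 by ring]
        exact min_scale (by positivity) (by positivity)
    _ = β / 2 * (5 + 2 * |β * μ|) * max 1 (β / 4) * min 1 (‖q‖ ^ 2) := by ring
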